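/- arXiv:0910.4337 — 2 statements merged into one kernel-verified Lean document; each statement's English description precedes it below -/
import Mathlib

section
/- The characteristic function of the density k(x) = (1/√(2π)) e^(x/2) e^(−e^x/2) is φ_k(t) = π^(−1/2) · 2^(it) · Γ(1/2 + it). -/
open MeasureTheory Real Complex

/-- The characteristic function of the density `k(x) = (1/√(2π)) e^(x/2) e^(-e^x/2)`
is `φ_k(t) = π^(-1/2) 2^(it) Γ(1/2 + it)`. -/
theorem charFun_log_chisq (t : ℝ) :
    (∫ x : ℝ, Complex.exp (Complex.I * t * x) *
        ((1 / Real.sqrt (2 * Real.pi)) * Real.exp (x / 2) *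
          Real.exp (- Real.exp x / 2) : ℝ)) =
      (1 / Real.sqrt Real.pi : ℝ) * (2 : ℂ) ^ (Complex.I * t) *
        Complex.Gamma (1 / 2 + Complex.I * t) := by
  have pi_pos := Real.pi_pos
  set s : ℂ := 1 / 2 + Complex.I * t with hs
  set g : ℝ → ℂ := fun y =>
    ((1 : ℝ) / Real.sqrt (2 * Real.pi)) *
      ((y : ℂ) ^ (s - 1) * Complex.exp (-((1 / 2 : ℝ) * (y : ℂ)))) with hg
  have hderiv : ∀ x ∈ Set.univ, HasDerivWithinAt Real.exp (Real.exp x) Set.univ x :=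
    fun x _ => (Real.hasDerivAt_exp x).hasDerivWithinAt
  have himg : Real.exp '' Set.univ = Set.Ioi 0 := by
    rw [Set.image_univ, Real.range_exp]
  have hinj : Set.InjOn Real.exp Set.univ := Real.exp_injective.injOn
  have key : (∫ y in Set.Ioi (0 : ℝ), g y) = ∫ x : ℝ, Real.exp x • g (Real.exp x) := by
    rw [← himg, integral_image_eq_integral_abs_deriv_smul MeasurableSet.univ hderiv hinj g]
    simp only [abs_of_pos (Real.exp_pos _), Measure.restrict_univ]
  have hcpow : ∀ x : ℝ, ((Real.exp x : ℝ) : ℂ) ^ (s - 1) = Complex.exp ((s - 1) * x) := by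
    intro x
    rw [Complex.ofReal_exp, Complex.cpow_def_of_ne_zero (Complex.exp_ne_zero _),
      Complex.log_exp (by simpa using pi_pos) (by simpa using pi_pos.le), mul_comm]
  have hintegrand : ∀ x : ℝ,
      Real.exp x • g (Real.exp x) =
        Complex.exp (Complex.I * t * x) *
          ((1 / Real.sqrt (2 * Real.pi)) * Real.exp (x / 2) *
            Real.exp (- Real.exp x / 2) : ℝ) := by
    intro x
    rw [hg]
    simp only [real_smul, hcpow]
    push_cast
    rw [← Complex.exp_add, mul_left_comm, ← Complex.exp_add]
    rw [show (x : ℂ) + ((s - 1) * x + -(1 / 2 * Complex.exp x)) =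
        Complex.I * t * x + (x / 2 + -Complex.exp x / 2) by rw [hs]; ring]
    rw [Complex.exp_add, Complex.exp_add]
    ring
  have hGamma : (∫ y in Set.Ioi (0 : ℝ), g y) =
      ((1 : ℝ) / Real.sqrt (2 * Real.pi)) * ((2 : ℂ) ^ s * Complex.Gamma s) := by
    rw [hg]
    rw [MeasureTheory.integral_const_mul]
    rw [Complex.integral_cpow_mul_exp_neg_mul_Ioi (by simp [hs]) (by norm_num : (0:ℝ) < 1/2)]
    norm_num
  have final : ((1 : ℝ) / Real.sqrt (2 * Real.pi) : ℂ) * ((2 : ℂ) ^ s * Complex.Gamma s) =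
      (1 / Real.sqrt Real.pi : ℝ) * (2 : ℂ) ^ (Complex.I * t) *
        Complex.Gamma (1 / 2 + Complex.I * t) := by
    rw [hs, show (1 / 2 + Complex.I * t : ℂ) = (1/2 : ℂ) + Complex.I * t from rfl,
      Complex.cpow_add _ _ (by norm_num : (2:ℂ) ≠ 0)]
    have h2 : (2 : ℂ) ^ (1/2 : ℂ) = ((Real.sqrt 2 : ℝ) : ℂ) := by
      rw [show ((1/2:ℂ)) = ((1/2:ℝ):ℂ) by norm_num,
        show ((2:ℂ)) = ((2:ℝ):ℂ) by norm_num, ← Complex.ofReal_cpow (by norm_num)]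
      norm_cast
      rw [Real.sqrt_eq_rpow]
    rw [h2, Real.sqrt_mul (by norm_num) Real.pi]
    have hsqrt2 : (Real.sqrt 2 : ℂ) ≠ 0 :=
      Complex.ofReal_ne_zero.mpr (by positivity)
    have hsqrtpi : (Real.sqrt Real.pi : ℂ) ≠ 0 :=
      Complex.ofReal_ne_zero.mpr (by positivity)
    push_cast
    field_simp
  calc (∫ x : ℝ, Complex.exp (Complex.I * t * x) *
        ((1 / Real.sqrt (2 * Real.pi)) * Real.exp (x / 2) *
          Real.exp (- Real.exp x / 2) : ℝ))
      = ∫ x : ℝ, Real.exp x • g (Real.exp x) := by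
        exact integral_congr_ae (Filter.Eventually.of_forall fun x => (hintegrand x).symm)
    _ = ∫ y in Set.Ioi (0 : ℝ), g y := key.symm
    _ = _ := by rw [hGamma, final]
end

section
/- If φ_w is supported in [−1,1] and |φ_k(t)| ≥ c·e^(−π|t|/2) for |t| large (and φ_k is continuous nonvanishing), then γ₀(h) := (1/2π) ∫_{−1}^{1} |φ_w(s)/φ_k(s/h)| ds satisfies γ₀(h) = O(h^(1+ρ) e^(π/(2h))) as h ↓ 0, provided φ_w(1−t) = A t^ρ + o(t^ρ) as t ↓ 0 and φ_w is symmetric with |φ_w| ≤ 1. -/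
open MeasureTheory Real Asymptotics intervalIntegral Filter

lemma rpow_exp_bound (p : ℝ) (hp : 0 < p) :
    ∃ M : ℝ, 0 < M ∧ ∀ x : ℝ, 0 ≤ x → x ^ p * Real.exp (-x / 2) ≤ M := by
  have hcont : Continuous fun x : ℝ => x ^ p * Real.exp (-x / 2) := by
    apply Continuous.mul _ (by continuity)
    exact continuous_iff_continuousAt.2 fun x =>
      Real.continuousAt_rpow_const x p (Or.inr hp.le)
  have ht : Tendsto (fun x : ℝ => x ^ p * Real.exp (-x / 2)) atTop (nhds 0) := by
    have := tendsto_rpow_mul_exp_neg_mul_atTop_nhds_zero p (1/2) (by norm_num)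
    refine this.congr fun x => ?_
    ring_nf
  have hev : ∀ᶠ x in atTop, (fun x : ℝ => x ^ p * Real.exp (-x / 2)) x < 1 :=
    ht.eventually_lt_const one_pos
  obtain ⟨X, hX⟩ := eventually_atTop.1 hev
  obtain ⟨x₀, _, hx₀⟩ := isCompact_Icc.exists_isMaxOn (Set.nonempty_Icc.2 (le_max_left 0 X))
    (hcont.continuousOn (s := Set.Icc 0 (max 0 X)))
  refine ⟨max 1 (x₀ ^ p * Real.exp (-x₀ / 2)), lt_of_lt_of_le one_pos (le_max_left _ _), ?_⟩
  intro x hx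
  rcases le_or_gt x (max 0 X) with h | h
  · exact le_trans (hx₀ ⟨hx, h⟩) (le_max_right _ _)
  · exact le_trans (hX x (le_of_lt (lt_of_le_of_lt (le_max_right 0 X) h))).le (le_max_left _ _)

/-- pointwise edge bound: `t^ρ e^{-πt/(2h)} ≤ M h^ρ e^{-t/(2h)}`. -/
lemma edge_pt (ρ M h t : ℝ) (hρ : 0 < ρ)
    (hM : ∀ x : ℝ, 0 ≤ x → x ^ ρ * Real.exp (-x / 2) ≤ M)
    (hh : 0 < h) (ht : 0 ≤ t) :
    t ^ ρ * Real.exp (-(Real.pi * t) / (2 * h)) ≤ M * h ^ ρ * Real.exp (-t / (2 * h)) := by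
  have hπ : (2 : ℝ) ≤ Real.pi := by linarith [Real.pi_gt_three]
  have h1 : t ^ ρ = h ^ ρ * (t / h) ^ ρ := by
    rw [Real.div_rpow ht hh.le]
    field_simp
  have h2 : Real.exp (-(Real.pi * t) / (2 * h)) ≤
      Real.exp (-(t / h) / 2) * Real.exp (-t / (2 * h)) := by
    rw [← Real.exp_add]
    apply Real.exp_le_exp.2
    have e1 : -(t / h) / 2 + -t / (2 * h) = -(t / h) := by field_simp; ring
    rw [e1]
    have e2 : t / h ≤ Real.pi * t / (2 * h) := by
      rw [div_le_div_iff₀ hh (by positivity : (0:ℝ) < 2 * h)]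
      nlinarith [mul_nonneg (mul_nonneg (sub_nonneg.2 hπ) ht) hh.le]
    have e3 : -(Real.pi * t) / (2 * h) = -(Real.pi * t / (2 * h)) := by ring
    rw [e3]
    linarith
  calc t ^ ρ * Real.exp (-(Real.pi * t) / (2 * h))
      ≤ (h ^ ρ * (t / h) ^ ρ) * (Real.exp (-(t / h) / 2) * Real.exp (-t / (2 * h))) := by
        rw [← h1]
        exact mul_le_mul_of_nonneg_left h2 (Real.rpow_nonneg ht ρ)
    _ = h ^ ρ * ((t / h) ^ ρ * Real.exp (-(t / h) / 2)) * Real.exp (-t / (2 * h)) := by ring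
    _ ≤ h ^ ρ * M * Real.exp (-t / (2 * h)) := by
        apply mul_le_mul_of_nonneg_right _ (Real.exp_pos _).le
        exact mul_le_mul_of_nonneg_left (hM _ (div_nonneg ht hh.le))
          (Real.rpow_nonneg hh.le ρ)
    _ = M * h ^ ρ * Real.exp (-t / (2 * h)) := by ring

lemma exp_int_right (h a b : ℝ) (hh : 0 < h) (hab : a ≤ b) :
    ∫ s in a..b, Real.exp (-(b - s) / (2 * h)) ≤ 2 * h := by
  have hF : ∀ s ∈ Set.uIcc a b,
      HasDerivAt (fun s => 2 * h * Real.exp (-(b - s) / (2 * h)))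
        (Real.exp (-(b - s) / (2 * h))) s := by
    intro s _
    have h1 : HasDerivAt (fun s : ℝ => -(b - s) / (2 * h)) (1 / (2 * h)) s := by
      have h0 : HasDerivAt (fun s : ℝ => -(b - s)) 1 s := by
        simpa using ((hasDerivAt_id s).const_sub b).fun_neg
      simpa using h0.div_const (2 * h)
    have h2 := h1.exp.const_mul (2 * h)
    refine h2.congr_deriv ?_
    field_simp
  rw [intervalIntegral.integral_eq_sub_of_hasDerivAt hF
    ((by continuity : Continuous fun s : ℝ => Real.exp (-(b - s) / (2 * h))).intervalIntegrable _ _)]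
  have hp : 0 ≤ 2 * h * Real.exp (-(b - a) / (2 * h)) := by positivity
  simp only [sub_self, zero_div, neg_zero, Real.exp_zero, mul_one]
  linarith

lemma exp_int_left (h a b : ℝ) (hh : 0 < h) (hab : a ≤ b) :
    ∫ s in a..b, Real.exp (-(s - a) / (2 * h)) ≤ 2 * h := by
  have hF : ∀ s ∈ Set.uIcc a b,
      HasDerivAt (fun s => -(2 * h) * Real.exp (-(s - a) / (2 * h)))
        (Real.exp (-(s - a) / (2 * h))) s := by
    intro s _
    have h1 : HasDerivAt (fun s : ℝ => -(s - a) / (2 * h)) (-(1 / (2 * h))) s := by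
      have h0 : HasDerivAt (fun s : ℝ => -(s - a)) (-1) s := by
        simpa using ((hasDerivAt_id s).sub_const a).fun_neg
      have := h0.div_const (2 * h)
      refine this.congr_deriv ?_
      ring
    have h2 := h1.exp.const_mul (-(2 * h))
    refine h2.congr_deriv ?_
    field_simp
  rw [intervalIntegral.integral_eq_sub_of_hasDerivAt hF
    ((by continuity : Continuous fun s : ℝ => Real.exp (-(s - a) / (2 * h))).intervalIntegrable _ _)]
  have hp : 0 ≤ 2 * h * Real.exp (-(b - a) / (2 * h)) := by positivity
  simp only [sub_self, zero_div, neg_zero, Real.exp_zero, mul_one]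
  linarith


/-- Bound on `γ₀(h) = (1/2π) ∫_{-1}^1 |φ_w(s)/φ_k(s/h)| ds`:
under the stated conditions on `φ_w` and `φ_k`, `γ₀(h) = O(h^{1+ρ} e^{π/(2h)})` as `h ↓ 0`. -/
theorem gamma0_bound (φw : ℝ → ℝ) (φk : ℝ → ℂ) (A ρ c T : ℝ)
    (hρ : 0 < ρ) (hc : 0 < c)
    (hφw_cont : Continuous φw)
    (hφw_symm : ∀ s, φw (-s) = φw s)
    (hφw_bdd : ∀ s, |φw s| ≤ 1)
    (hφw_supp : ∀ s, s ∉ Set.Icc (-1 : ℝ) 1 → φw s = 0)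
    (hφw_edge : (fun t => φw (1 - t) - A * t ^ ρ) =o[nhdsWithin 0 (Set.Ioi 0)]
      fun t => t ^ ρ)
    (hφk_cont : Continuous φk)
    (hφk_ne : ∀ t, φk t ≠ 0)
    (hφk_lower : ∀ t : ℝ, T ≤ |t| → c * Real.exp (-Real.pi * |t| / 2) ≤ ‖φk t‖) :
    ∃ C h₀ : ℝ, 0 < C ∧ 0 < h₀ ∧ ∀ h : ℝ, 0 < h → h < h₀ →
      (1 / (2 * Real.pi)) * ∫ s in (-1 : ℝ)..1, ‖(φw s : ℂ) / φk (s / h)‖ ≤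
        C * h ^ (1 + ρ) * Real.exp (Real.pi / (2 * h)) := by
  obtain ⟨M, hM0, hM⟩ := rpow_exp_bound ρ hρ
  obtain ⟨M₁, hM₁0, hM₁⟩ := rpow_exp_bound (1 + ρ) (by linarith)
  -- uniform lower bound for ‖φk‖
  set T' : ℝ := max T 1 with hT'def
  have hT'1 : (1 : ℝ) ≤ T' := le_max_right T 1
  obtain ⟨t₀, _, ht₀⟩ := isCompact_Icc.exists_isMinOn
    (Set.nonempty_Icc.2 (by linarith : -T' ≤ T')) (hφk_cont.norm.continuousOn)
  set m : ℝ := ‖φk t₀‖ with hmdef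
  have hm0 : 0 < m := norm_pos_iff.2 (hφk_ne t₀)
  set c' : ℝ := min c m with hc'def
  have hc'0 : 0 < c' := lt_min hc hm0
  have hkey : ∀ t : ℝ, c' * Real.exp (-(Real.pi * |t|) / 2) ≤ ‖φk t‖ := by
    intro t
    rcases le_or_gt T' |t| with hT | hT
    · calc c' * Real.exp (-(Real.pi * |t|) / 2)
          ≤ c * Real.exp (-Real.pi * |t| / 2) := by
            rw [show -Real.pi * |t| / 2 = -(Real.pi * |t|) / 2 by ring]
            exact mul_le_mul_of_nonneg_right (min_le_left _ _) (Real.exp_pos _).le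
        _ ≤ ‖φk t‖ := hφk_lower t (le_trans (le_max_left T 1) hT)
    · have htI : t ∈ Set.Icc (-T') T' := abs_le.1 hT.le
      calc c' * Real.exp (-(Real.pi * |t|) / 2) ≤ m * 1 := by
            apply mul_le_mul (min_le_right _ _) _ (Real.exp_pos _).le hm0.le
            apply Real.exp_le_one_iff.2
            have : 0 ≤ Real.pi * |t| := by positivity
            linarith
        _ = m := mul_one m
        _ ≤ ‖φk t‖ := ht₀ htI
  -- φw vanishes at the endpoint
  have φw1 : φw 1 = 0 := by
    have h1 : Tendsto φw (nhdsWithin 1 (Set.Ioi 1)) (nhds (φw 1)) :=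
      (hφw_cont.tendsto 1).mono_left nhdsWithin_le_nhds
    have h2 : Tendsto φw (nhdsWithin 1 (Set.Ioi 1)) (nhds 0) := by
      apply Tendsto.congr' _ (tendsto_const_nhds (α := ℝ))
      filter_upwards [self_mem_nhdsWithin] with x hx
      exact (hφw_supp x fun hmem => absurd hmem.2 (not_le.2 hx)).symm
    exact tendsto_nhds_unique h1 h2
  -- edge bound
  obtain ⟨ε, hε0, hε⟩ := Metric.eventually_nhds_iff.1
    (eventually_nhdsWithin_iff.1 (hφw_edge.def one_pos))
  set δ : ℝ := min (ε / 2) (1 / 2) with hδdef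
  have hδ0 : 0 < δ := lt_min (by linarith) (by norm_num)
  have hδhalf : δ ≤ 1 / 2 := min_le_right _ _
  set B : ℝ := |A| + 1 with hBdef
  have hB0 : 0 < B := by positivity
  have hedge : ∀ t : ℝ, 0 ≤ t → t ≤ δ → |φw (1 - t)| ≤ B * t ^ ρ := by
    intro t ht0 htδ
    rcases eq_or_lt_of_le ht0 with rfl | ht0'
    · simp [φw1, Real.zero_rpow hρ.ne']
    · have hd : dist t 0 < ε := by
        rw [Real.dist_eq, sub_zero, abs_of_pos ht0']
        have := min_le_left (ε / 2) (1 / 2)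
        linarith
      have hb := hε hd (Set.mem_Ioi.2 ht0')
      simp only [Real.norm_eq_abs, one_mul] at hb
      have htρ : (0 : ℝ) ≤ t ^ ρ := Real.rpow_nonneg ht0 ρ
      have habs : |t ^ ρ| = t ^ ρ := abs_of_nonneg htρ
      calc |φw (1 - t)| = |(φw (1 - t) - A * t ^ ρ) + A * t ^ ρ| := by ring_nf
        _ ≤ |φw (1 - t) - A * t ^ ρ| + |A * t ^ ρ| := abs_add_le _ _
        _ ≤ t ^ ρ + |A| * t ^ ρ := by
            rw [abs_mul, habs]
            exact add_le_add (hb.trans habs.le) le_rfl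
        _ = B * t ^ ρ := by rw [hBdef]; ring
  -- the constant
  set K : ℝ := 2 * (M₁ * (2 / (Real.pi * δ)) ^ (1 + ρ)) + 4 * (B * M) with hKdef
  have hK0 : 0 < K := by positivity
  refine ⟨K / (2 * Real.pi * c'), 1, by positivity, one_pos, ?_⟩
  intro h hh hh1
  set E : ℝ := Real.exp (Real.pi / (2 * h)) with hEdef
  have hE0 : 0 < E := Real.exp_pos _
  set g : ℝ → ℝ := fun s => |φw s| * Real.exp (Real.pi * |s| / (2 * h)) with hgdef
  have hgcont : Continuous g := by
    apply hφw_cont.abs.mul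
    exact Real.continuous_exp.comp ((continuous_const.mul continuous_abs).div_const _)
  have hgnonneg : ∀ s, 0 ≤ g s := fun s => by positivity
  -- pointwise bound of the integrand by g / c'
  have hExp : ∀ s : ℝ, ‖(φw s : ℂ) / φk (s / h)‖ ≤ g s / c' := by
    intro s
    have hden : c' / Real.exp (Real.pi * |s| / (2 * h)) ≤ ‖φk (s / h)‖ := by
      have hk := hkey (s / h)
      rw [abs_div, abs_of_pos hh] at hk
      rw [show -(Real.pi * (|s| / h)) / 2 = -(Real.pi * |s| / (2 * h)) by ring] at hk
      rwa [Real.exp_neg, ← div_eq_mul_inv] at hk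
    have hden0 : 0 < c' / Real.exp (Real.pi * |s| / (2 * h)) := by positivity
    rw [norm_div, Complex.norm_real, Real.norm_eq_abs]
    calc |φw s| / ‖φk (s / h)‖
        ≤ |φw s| / (c' / Real.exp (Real.pi * |s| / (2 * h))) := by
          gcongr
      _ = g s / c' := by rw [div_div_eq_mul_div]
  -- integrability
  have cont1 : Continuous fun s : ℝ => ‖(φw s : ℂ) / φk (s / h)‖ := by
    apply Continuous.norm
    exact (Complex.continuous_ofReal.comp hφw_cont).div
      (hφk_cont.comp (continuous_id.div_const h)) fun s => hφk_ne _
  -- bound for the g-integral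
  have hgbound : ∫ s in (-1 : ℝ)..1, g s ≤ K * h ^ (1 + ρ) * E := by
    have hδ1 : δ ≤ 1 := by linarith
    set a1 : ℝ := -(1 - δ) with ha1
    set b1 : ℝ := 1 - δ with hb1
    have hab : a1 ≤ b1 := by rw [ha1, hb1]; linarith
    have hgi : ∀ a b : ℝ, IntervalIntegrable g volume a b := fun a b =>
      hgcont.intervalIntegrable a b
    have hsplit : ∫ s in (-1:ℝ)..1, g s =
        (∫ s in (-1:ℝ)..a1, g s) + ((∫ s in a1..b1, g s) + (∫ s in b1..(1:ℝ), g s)) := by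
      rw [integral_add_adjacent_intervals (hgi a1 b1) (hgi b1 1),
          integral_add_adjacent_intervals (hgi (-1) a1) (hgi a1 1)]
    -- right edge
    have hptR : ∀ s ∈ Set.Icc b1 (1:ℝ), g s ≤
        (B * (M * h ^ ρ) * E) * Real.exp (-(1 - s) / (2 * h)) := by
      intro s hs
      have hs1 : 1 - δ ≤ s := hs.1
      have hs2 : s ≤ 1 := hs.2
      have hspos : 0 < s := by linarith [hδhalf]
      have ht0 : (0:ℝ) ≤ 1 - s := by linarith
      have htδ : 1 - s ≤ δ := by linarith
      have h1 : |φw s| ≤ B * (1 - s) ^ ρ := by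
        have h0 := hedge (1 - s) ht0 htδ
        simpa using h0
      have h2 : Real.exp (Real.pi * |s| / (2 * h)) =
          E * Real.exp (-(Real.pi * (1 - s)) / (2 * h)) := by
        rw [hEdef, ← Real.exp_add, abs_of_pos hspos]
        congr 1; field_simp; ring
      have h3 := edge_pt ρ M h (1 - s) hρ hM hh ht0
      calc g s = |φw s| * Real.exp (Real.pi * |s| / (2 * h)) := rfl
        _ ≤ (B * (1 - s) ^ ρ) * (E * Real.exp (-(Real.pi * (1 - s)) / (2 * h))) := by
            rw [h2]; exact mul_le_mul_of_nonneg_right h1 (by positivity)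
        _ = B * E * ((1 - s) ^ ρ * Real.exp (-(Real.pi * (1 - s)) / (2 * h))) := by ring
        _ ≤ B * E * (M * h ^ ρ * Real.exp (-(1 - s) / (2 * h))) :=
            mul_le_mul_of_nonneg_left h3 (by positivity)
        _ = (B * (M * h ^ ρ) * E) * Real.exp (-(1 - s) / (2 * h)) := by ring
    have hR : ∫ s in b1..(1:ℝ), g s ≤ (B * (M * h ^ ρ) * E) * (2 * h) := by
      calc ∫ s in b1..(1:ℝ), g s
          ≤ ∫ s in b1..(1:ℝ), (B * (M * h ^ ρ) * E) * Real.exp (-(1 - s) / (2 * h)) := by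
            apply intervalIntegral.integral_mono_on (by rw [hb1]; linarith) (hgi _ _)
              _ hptR
            exact (continuous_const.mul (Real.continuous_exp.comp
              (((continuous_const.sub continuous_id).neg).div_const (2 * h)))).intervalIntegrable _ _
        _ = (B * (M * h ^ ρ) * E) * ∫ s in b1..(1:ℝ), Real.exp (-(1 - s) / (2 * h)) :=
            integral_const_mul _ _
        _ ≤ (B * (M * h ^ ρ) * E) * (2 * h) :=
            mul_le_mul_of_nonneg_left (exp_int_right h b1 1 hh (by rw [hb1]; linarith))
              (by positivity)
    -- left edge
    have hptL : ∀ s ∈ Set.Icc (-1:ℝ) a1, g s ≤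
        (B * (M * h ^ ρ) * E) * Real.exp (-(s - (-1)) / (2 * h)) := by
      intro s hs
      have hs1 : -1 ≤ s := hs.1
      have hs2 : s ≤ -(1 - δ) := hs.2
      have hsneg : s < 0 := by linarith [hδhalf]
      have ht0 : (0:ℝ) ≤ 1 + s := by linarith
      have htδ : 1 + s ≤ δ := by linarith
      have h1 : |φw s| ≤ B * (1 + s) ^ ρ := by
        have h0 := hedge (1 + s) ht0 htδ
        rw [show (1:ℝ) - (1 + s) = -s by ring, hφw_symm s] at h0
        exact h0
      have h2 : Real.exp (Real.pi * |s| / (2 * h)) =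
          E * Real.exp (-(Real.pi * (1 + s)) / (2 * h)) := by
        rw [hEdef, ← Real.exp_add, abs_of_neg hsneg]
        congr 1; field_simp; ring
      have h3 := edge_pt ρ M h (1 + s) hρ hM hh ht0
      calc g s = |φw s| * Real.exp (Real.pi * |s| / (2 * h)) := rfl
        _ ≤ (B * (1 + s) ^ ρ) * (E * Real.exp (-(Real.pi * (1 + s)) / (2 * h))) := by
            rw [h2]; exact mul_le_mul_of_nonneg_right h1 (by positivity)
        _ = B * E * ((1 + s) ^ ρ * Real.exp (-(Real.pi * (1 + s)) / (2 * h))) := by ring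
        _ ≤ B * E * (M * h ^ ρ * Real.exp (-(1 + s) / (2 * h))) :=
            mul_le_mul_of_nonneg_left h3 (by positivity)
        _ = (B * (M * h ^ ρ) * E) * Real.exp (-(s - (-1)) / (2 * h)) := by
            rw [show -(s - (-1)) = -(1 + s) by ring]; ring
    have hL : ∫ s in (-1:ℝ)..a1, g s ≤ (B * (M * h ^ ρ) * E) * (2 * h) := by
      calc ∫ s in (-1:ℝ)..a1, g s
          ≤ ∫ s in (-1:ℝ)..a1, (B * (M * h ^ ρ) * E) * Real.exp (-(s - (-1)) / (2 * h)) := by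
            apply intervalIntegral.integral_mono_on (by rw [ha1]; linarith) (hgi _ _)
              _ hptL
            exact (continuous_const.mul (Real.continuous_exp.comp
              (((continuous_id.sub continuous_const).neg).div_const (2 * h)))).intervalIntegrable _ _
        _ = (B * (M * h ^ ρ) * E) * ∫ s in (-1:ℝ)..a1, Real.exp (-(s - (-1)) / (2 * h)) :=
            integral_const_mul _ _
        _ ≤ (B * (M * h ^ ρ) * E) * (2 * h) :=
            mul_le_mul_of_nonneg_left (exp_int_left h (-1) a1 hh (by rw [ha1]; linarith))
              (by positivity)
    -- middle
    have hptM : ∀ s ∈ Set.Icc a1 b1, g s ≤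
        (M₁ * (2 / (Real.pi * δ)) ^ (1 + ρ)) * h ^ (1 + ρ) * E := by
      intro s hs
      have habs : |s| ≤ 1 - δ := abs_le.2 ⟨by linarith [hs.1], by linarith [hs.2]⟩
      have h1 : g s ≤ Real.exp (Real.pi * (1 - δ) / (2 * h)) := by
        calc g s ≤ 1 * Real.exp (Real.pi * |s| / (2 * h)) :=
              mul_le_mul_of_nonneg_right (hφw_bdd s) (Real.exp_pos _).le
          _ = Real.exp (Real.pi * |s| / (2 * h)) := one_mul _
          _ ≤ Real.exp (Real.pi * (1 - δ) / (2 * h)) := by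
              apply Real.exp_le_exp.2
              gcongr
      set x : ℝ := Real.pi * δ / (2 * h) with hxdef
      have hx0 : 0 < x := by rw [hxdef]; positivity
      have h2 : Real.exp (-(Real.pi * δ) / (2 * h)) ≤
          M₁ * (2 / (Real.pi * δ)) ^ (1 + ρ) * h ^ (1 + ρ) := by
        have hb := hM₁ x hx0.le
        have e1 : Real.exp (-(Real.pi * δ) / (2 * h)) = Real.exp (-x) := by
          rw [hxdef]; congr 1; ring
        have e2 : Real.exp (-x) ≤ Real.exp (-x / 2) := Real.exp_le_exp.2 (by linarith)
        have e3 : Real.exp (-x / 2) ≤ M₁ / x ^ (1 + ρ) := by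
          rw [le_div_iff₀ (Real.rpow_pos_of_pos hx0 _)]
          linarith [hb, mul_comm (Real.exp (-x / 2)) (x ^ (1 + ρ))]
        have i1 : x⁻¹ = 2 / (Real.pi * δ) * h := by
          rw [hxdef]; field_simp
        have e4 : M₁ / x ^ (1 + ρ) = M₁ * (2 / (Real.pi * δ)) ^ (1 + ρ) * h ^ (1 + ρ) := by
          rw [div_eq_mul_inv, ← Real.inv_rpow hx0.le, i1,
            Real.mul_rpow (by positivity) hh.le, ← mul_assoc]
        rw [e1]
        calc Real.exp (-x) ≤ Real.exp (-x / 2) := e2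
          _ ≤ M₁ / x ^ (1 + ρ) := e3
          _ = _ := e4
      calc g s ≤ Real.exp (Real.pi * (1 - δ) / (2 * h)) := h1
        _ = E * Real.exp (-(Real.pi * δ) / (2 * h)) := by
            rw [hEdef, ← Real.exp_add]; congr 1; field_simp; ring
        _ ≤ E * (M₁ * (2 / (Real.pi * δ)) ^ (1 + ρ) * h ^ (1 + ρ)) :=
            mul_le_mul_of_nonneg_left h2 hE0.le
        _ = (M₁ * (2 / (Real.pi * δ)) ^ (1 + ρ)) * h ^ (1 + ρ) * E := by ring
    have hMid : ∫ s in a1..b1, g s ≤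
        2 * ((M₁ * (2 / (Real.pi * δ)) ^ (1 + ρ)) * h ^ (1 + ρ) * E) := by
      calc ∫ s in a1..b1, g s
          ≤ ∫ s in a1..b1, (M₁ * (2 / (Real.pi * δ)) ^ (1 + ρ)) * h ^ (1 + ρ) * E :=
            intervalIntegral.integral_mono_on hab (hgi _ _) intervalIntegrable_const hptM
        _ = (b1 - a1) * ((M₁ * (2 / (Real.pi * δ)) ^ (1 + ρ)) * h ^ (1 + ρ) * E) := by
            rw [intervalIntegral.integral_const, smul_eq_mul]
        _ ≤ 2 * ((M₁ * (2 / (Real.pi * δ)) ^ (1 + ρ)) * h ^ (1 + ρ) * E) := by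
            apply mul_le_mul_of_nonneg_right _ (by positivity)
            rw [hb1, ha1]; linarith
    rw [hsplit]
    calc (∫ s in (-1:ℝ)..a1, g s) + ((∫ s in a1..b1, g s) + (∫ s in b1..(1:ℝ), g s))
        ≤ (B * (M * h ^ ρ) * E) * (2 * h) +
          (2 * ((M₁ * (2 / (Real.pi * δ)) ^ (1 + ρ)) * h ^ (1 + ρ) * E) +
            (B * (M * h ^ ρ) * E) * (2 * h)) := add_le_add hL (add_le_add hMid hR)
      _ = K * h ^ (1 + ρ) * E := by
          rw [hKdef, Real.rpow_add hh, Real.rpow_one]; ring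
  -- put everything together
  have step1 : ∫ s in (-1 : ℝ)..1, ‖(φw s : ℂ) / φk (s / h)‖ ≤
      (∫ s in (-1 : ℝ)..1, g s) / c' := by
    rw [← intervalIntegral.integral_div]
    exact intervalIntegral.integral_mono_on (by norm_num)
      (cont1.intervalIntegrable _ _) ((hgcont.div_const c').intervalIntegrable _ _)
      fun s _ => hExp s
  have hπ0 : (0 : ℝ) < Real.pi := Real.pi_pos
  calc (1 / (2 * Real.pi)) * ∫ s in (-1 : ℝ)..1, ‖(φw s : ℂ) / φk (s / h)‖
      ≤ (1 / (2 * Real.pi)) * ((K * h ^ (1 + ρ) * E) / c') := by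
        apply mul_le_mul_of_nonneg_left _ (by positivity)
        exact le_trans step1 ((div_le_div_iff_of_pos_right hc'0).2 hgbound)
    _ = K / (2 * Real.pi * c') * h ^ (1 + ρ) * E := by field_simp
end
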